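/- There exist universal constants c0, c1, c2 > 0 with the following property. In the structured setting (U, V ∈ R^{n×r}, Ū, V̄ ∈ R^{n×r̄} with orthonormal columns, col(U) ⊆ col(Ū), col(V) ⊆ col(V̄), standard incoherence parameters μ0 and μ̄0 respectively), for any fixed matrix Z ∈ R^{n×n} and a Bernoulli(p) sample Ω with p ≥ c0 · μ0 μ̄0 r r̄ log n / n, with probability at least 1 − c1 n^{−c2}, ‖(P_T R_Ω − P_T)Z‖_∞ ≤ (1/2) ‖Z‖_∞. -/

import Mathlib

open MeasureTheory Matrix

noncomputable section

/-- Frobenius norm of a real matrix. -/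
def frobNorm {m n : ℕ} (X : Matrix (Fin m) (Fin n) ℝ) : ℝ :=
  Real.sqrt (∑ i, ∑ j, (X i j) ^ 2)

/-- Nuclear norm: sum of singular values (square roots of eigenvalues of XᵀX). -/
def nuclearNorm {m n : ℕ} (X : Matrix (Fin m) (Fin n) ℝ) : ℝ :=
  ∑ i, Real.sqrt ((show (Xᵀ * X).IsHermitian from by
    simpa using Matrix.isHermitian_conjTranspose_mul_self X).eigenvalues i)

/-- Spectral norm: operator norm of the associated Euclidean linear map. -/
def specNorm {m n : ℕ} (X : Matrix (Fin m) (Fin n) ℝ) : ℝ :=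
  ‖(Matrix.toEuclideanLin X).toContinuousLinearMap‖

/-- Entrywise ℓ∞ norm. -/
def linf {m n : ℕ} (X : Matrix (Fin m) (Fin n) ℝ) : ℝ := ⨆ i, ⨆ j, |X i j|

/-- ℓ∞,2 norm: maximum of the largest row and column ℓ₂ norms. -/
def linf2 {n : ℕ} (X : Matrix (Fin n) (Fin n) ℝ) : ℝ :=
  max (⨆ i, Real.sqrt (∑ j, (X i j) ^ 2)) (⨆ j, Real.sqrt (∑ i, (X i j) ^ 2))

/-- Operator norm (w.r.t. the Frobenius norm) of a map on n×n matrices. -/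
def opNormMap {n : ℕ} (A : Matrix (Fin n) (Fin n) ℝ → Matrix (Fin n) (Fin n) ℝ) : ℝ :=
  ⨆ Z : {Z : Matrix (Fin n) (Fin n) ℝ // frobNorm Z ≤ 1}, frobNorm (A Z.1)

/-- P_Ω for a Boolean sample ω. -/
def projB {n : ℕ} (ω : Fin n × Fin n → Bool) (Z : Matrix (Fin n) (Fin n) ℝ) :
    Matrix (Fin n) (Fin n) ℝ := fun i j => if ω (i, j) then Z i j else 0

open Classical in
/-- P_Ω for a set Ω of indices. -/
def projS {n : ℕ} (Ω : Set (Fin n × Fin n)) (Z : Matrix (Fin n) (Fin n) ℝ) :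
    Matrix (Fin n) (Fin n) ℝ := fun i j => if (i, j) ∈ Ω then Z i j else 0

/-- The tangent-space projection P_T determined by U and V. -/
def projT {n r : ℕ} (U V : Matrix (Fin n) (Fin r) ℝ) (Z : Matrix (Fin n) (Fin n) ℝ) :
    Matrix (Fin n) (Fin n) ℝ :=
  U * Uᵀ * Z + Z * V * Vᵀ - U * Uᵀ * Z * V * Vᵀ

/-- Bernoulli(p) measure on Bool. -/
def bern (p : ℝ) : Measure Bool :=
  ENNReal.ofReal p • Measure.dirac true + ENNReal.ofReal (1 - p) • Measure.dirac false

/-- Product Bernoulli(p) measure on index samples: each (i,j) observed independently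
with probability p. -/
def sampleMeasure (n : ℕ) (p : ℝ) : Measure (Fin n × Fin n → Bool) :=
  Measure.pi fun _ => bern p

/-- ℓ₂ norm of the i-th row of U, i.e. ‖Uᵀ e_i‖₂. -/
def rowNorm {n r : ℕ} (U : Matrix (Fin n) (Fin r) ℝ) (i : Fin n) : ℝ :=
  Real.sqrt (∑ k, (U i k) ^ 2)

/-- The tangent-space projection P_T in the structured (cluster) setting. -/
def projTc {n r rb : ℕ} (U V : Matrix (Fin n) (Fin r) ℝ)
    (Ub Vb : Matrix (Fin n) (Fin rb) ℝ) (Z : Matrix (Fin n) (Fin n) ℝ) :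
    Matrix (Fin n) (Fin n) ℝ :=
  U * Uᵀ * Z * Vb * Vbᵀ + Ub * Ubᵀ * Z * V * Vᵀ - U * Uᵀ * Z * V * Vᵀ

/-- The projection P_{T⊥} in the structured (cluster) setting. -/
def projTperpC {n r rb : ℕ} (U V : Matrix (Fin n) (Fin r) ℝ)
    (Ub Vb : Matrix (Fin n) (Fin rb) ℝ) (Z : Matrix (Fin n) (Fin n) ℝ) :
    Matrix (Fin n) (Fin n) ℝ :=
  (Ub * Ubᵀ - U * Uᵀ) * Z * (Vb * Vbᵀ - V * Vᵀ)


/-! ### Auxiliary lemmas -/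

section Aux

open Real

lemma bern_prob {p : ℝ} (hp0 : 0 ≤ p) (hp1 : p ≤ 1) : IsProbabilityMeasure (bern p) := by
  constructor
  simp only [bern, Measure.add_apply, Measure.smul_apply, Measure.dirac_apply_of_mem
    (Set.mem_univ _), smul_eq_mul, mul_one]
  rw [← ENNReal.ofReal_add hp0 (by linarith)]
  simp

lemma integral_bern {p : ℝ} (hp0 : 0 ≤ p) (hp1 : p ≤ 1) (f : Bool → ℝ) :
    ∫ x, f x ∂(bern p) = p * f true + (1 - p) * f false := by
  haveI := bern_prob hp0 hp1
  rw [bern, integral_add_measure ?h1 ?h2]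
  · rw [integral_smul_measure, integral_smul_measure, integral_dirac, integral_dirac,
      ENNReal.toReal_ofReal hp0, ENNReal.toReal_ofReal (by linarith), smul_eq_mul, smul_eq_mul]
  case h1 =>
    haveI : IsFiniteMeasure (ENNReal.ofReal p • Measure.dirac (true : Bool)) := by
      constructor; simp [lt_top_iff_ne_top, ENNReal.mul_ne_top]
    exact Integrable.of_finite
  case h2 =>
    haveI : IsFiniteMeasure (ENNReal.ofReal (1-p) • Measure.dirac (false : Bool)) := by
      constructor; simp [lt_top_iff_ne_top, ENNReal.mul_ne_top]
    exact Integrable.of_finite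

lemma exp_quad {x : ℝ} (h : |x| ≤ 1) : Real.exp x ≤ 1 + x + x ^ 2 := by
  have hb := Real.exp_bound h (n := 2) (by norm_num)
  have h1 : (∑ m ∈ Finset.range 2, x ^ m / m.factorial) = 1 + x := by
    simp [Finset.sum_range_succ]
  rw [h1] at hb
  have h2 : (|x| ^ 2 * ((2:ℕ).succ / ((2:ℕ).factorial * (2:ℕ))) : ℝ) = x ^ 2 * (3/4) := by
    rw [sq_abs]; norm_num [Nat.factorial]
  rw [h2] at hb
  have := (abs_sub_le_iff.1 hb).1
  nlinarith [sq_nonneg x]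

lemma coord_bound {p u : ℝ} (hp0 : 0 < p) (hp1 : p ≤ 1) (hu : |u| ≤ p) :
    p * Real.exp (u * (p⁻¹ - 1)) + (1 - p) * Real.exp (-u) ≤ Real.exp (2 * u ^ 2 / p) := by
  have hinv : 1 ≤ p⁻¹ := (one_le_inv₀ hp0).2 hp1
  have hx1 : |u * (p⁻¹ - 1)| ≤ 1 := by
    rw [abs_mul, abs_of_nonneg (by linarith : (0:ℝ) ≤ p⁻¹ - 1)]
    calc |u| * (p⁻¹ - 1) ≤ p * (p⁻¹ - 1) := by
          apply mul_le_mul_of_nonneg_right hu; linarith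
      _ = 1 - p := by field_simp
      _ ≤ 1 := by linarith
  have hx2 : |(-u)| ≤ 1 := by rw [abs_neg]; linarith
  have e1 := exp_quad hx1
  have e2 := exp_quad hx2
  have key : p * Real.exp (u * (p⁻¹ - 1)) + (1 - p) * Real.exp (-u)
      ≤ 1 + 2 * u ^ 2 / p := by
    have hq : p * (u * (p⁻¹ - 1)) ^ 2 + (1 - p) * (-u) ^ 2 ≤ 2 * u ^ 2 / p := by
      have h3 : p * (u * (p⁻¹ - 1)) ^ 2 = u ^ 2 * (1 - p) ^ 2 / p := by
        field_simp
      rw [h3, neg_sq, div_add' _ _ _ hp0.ne', div_le_div_iff₀ hp0 hp0]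
      nlinarith [sq_nonneg u, sq_nonneg (1 - p), hp0.le, sq_nonneg (u * p),
        mul_nonneg (sq_nonneg u) hp0.le]
    have hl : p * (u * (p⁻¹ - 1)) + (1 - p) * (-u) = 0 := by field_simp; ring
    nlinarith [e1, e2, hp0.le, (by linarith : (0:ℝ) ≤ 1 - p)]
  calc _ ≤ 1 + 2 * u ^ 2 / p := key
    _ ≤ Real.exp (2 * u ^ 2 / p) := by
        have := Real.add_one_le_exp (2 * u ^ 2 / p); linarith

open ProbabilityTheory in
lemma chernoff_one {ι : Type*} [Fintype ι] {p : ℝ} (hp0 : 0 < p) (hp1 : p ≤ 1)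
    (c : ι → ℝ) (t l : ℝ) (hl : 0 ≤ l) (hlc : ∀ i, l * |c i| ≤ p) :
    (Measure.pi fun _ : ι => bern p)
      {ω | t ≤ ∑ i, c i * (if ω i then p⁻¹ - 1 else -1)} ≤
    ENNReal.ofReal (Real.exp (-(l * t) + ∑ i, 2 * (l * c i) ^ 2 / p)) := by
  haveI hbp : IsProbabilityMeasure (bern p) := bern_prob hp0.le hp1
  set μ : Measure (ι → Bool) := Measure.pi fun _ : ι => bern p with hμ
  haveI : IsProbabilityMeasure μ := by rw [hμ]; infer_instance
  set S : (ι → Bool) → ℝ := fun ω => ∑ i, c i * (if ω i then p⁻¹ - 1 else -1) with hS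
  have hint : Integrable (fun ω => Real.exp (l * S ω)) μ := Integrable.of_finite
  have hmain := measure_ge_le_exp_mul_mgf (X := S) (μ := μ) (t := l) t hl hint
  have hmgf : mgf S μ l ≤ Real.exp (∑ i, 2 * (l * c i) ^ 2 / p) := by
    have hprod : mgf S μ l
        = ∏ i, ∫ x, Real.exp (l * (c i * (if x then p⁻¹ - 1 else -1))) ∂(bern p) := by
      letI : MeasureSpace Bool := ⟨bern p⟩
      have hvol : μ = (volume : Measure (ι → Bool)) := rfl
      rw [mgf, hvol]
      have : ∀ ω : ι → Bool, Real.exp (l * S ω)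
          = ∏ i, Real.exp (l * (c i * (if ω i then p⁻¹ - 1 else -1))) := by
        intro ω
        rw [hS, Finset.mul_sum, Real.exp_sum]
      simp_rw [this]
      exact MeasureTheory.integral_fintype_prod_eq_prod
        (fun i (x : Bool) => Real.exp (l * (c i * (if x then p⁻¹ - 1 else -1))))
    rw [hprod]
    have hfac : ∀ i, ∫ x, Real.exp (l * (c i * (if x then p⁻¹ - 1 else -1))) ∂(bern p)
        ≤ Real.exp (2 * (l * c i) ^ 2 / p) := by
      intro i
      rw [integral_bern hp0.le hp1]
      have h1 : l * (c i * (p⁻¹ - 1)) = (l * c i) * (p⁻¹ - 1) := by ring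
      have h2 : l * (c i * (-1)) = -(l * c i) := by ring
      rw [if_pos rfl, if_neg (by decide : ¬(false = true)), h1, h2]
      exact coord_bound hp0 hp1 (by rw [abs_mul, abs_of_nonneg hl]; exact hlc i)
    calc ∏ i, ∫ x, Real.exp (l * (c i * (if x then p⁻¹ - 1 else -1))) ∂(bern p)
        ≤ ∏ i, Real.exp (2 * (l * c i) ^ 2 / p) := by
          apply Finset.prod_le_prod
          · intro i _
            rw [integral_bern hp0.le hp1]
            have := Real.exp_pos (l * (c i * (if true then p⁻¹ - 1 else -1)))
            have := Real.exp_pos (l * (c i * (if false then p⁻¹ - 1 else -1)))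
            nlinarith [hp0.le, hp1]
          · exact fun i _ => hfac i
      _ = Real.exp (∑ i, 2 * (l * c i) ^ 2 / p) := (Real.exp_sum _ _).symm
  have hfin : μ {ω | t ≤ S ω} ≠ ⊤ := measure_ne_top _ _
  calc μ {ω | t ≤ S ω} = ENNReal.ofReal ((μ {ω | t ≤ S ω}).toReal) :=
        (ENNReal.ofReal_toReal hfin).symm
    _ ≤ ENNReal.ofReal (Real.exp (-(l * t) + ∑ i, 2 * (l * c i) ^ 2 / p)) := by
        apply ENNReal.ofReal_le_ofReal
        calc (μ {ω | t ≤ S ω}).toReal ≤ Real.exp (-l * t) * mgf S μ l := hmain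
          _ ≤ Real.exp (-l * t) * Real.exp (∑ i, 2 * (l * c i) ^ 2 / p) :=
              mul_le_mul_of_nonneg_left hmgf (Real.exp_pos _).le
          _ = Real.exp (-(l * t) + ∑ i, 2 * (l * c i) ^ 2 / p) := by
              rw [← Real.exp_add, neg_mul]

lemma rowNorm_nonneg {n r : ℕ} (U : Matrix (Fin n) (Fin r) ℝ) (i : Fin n) :
    0 ≤ rowNorm U i := Real.sqrt_nonneg _

lemma sq_rowNorm {n r : ℕ} (U : Matrix (Fin n) (Fin r) ℝ) (i : Fin n) :
    rowNorm U i ^ 2 = ∑ k, (U i k) ^ 2 :=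
  Real.sq_sqrt (Finset.sum_nonneg fun _ _ => sq_nonneg _)

lemma triple_apply {n : ℕ} (A W B : Matrix (Fin n) (Fin n) ℝ) (a b : Fin n) :
    (A * W * B) a b = ∑ i, ∑ j, A a i * W i j * B j b := by
  calc (A * W * B) a b = ∑ j, (A * W) a j * B j b := Matrix.mul_apply
    _ = ∑ j, (∑ i, A a i * W i j) * B j b :=
        Finset.sum_congr rfl fun j _ => by rw [Matrix.mul_apply]
    _ = ∑ j, ∑ i, A a i * W i j * B j b :=
        Finset.sum_congr rfl fun j _ => by rw [Finset.sum_mul]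
    _ = ∑ i, ∑ j, A a i * W i j * B j b := Finset.sum_comm

lemma entry_bound {n r : ℕ} (A : Matrix (Fin n) (Fin r) ℝ) (a i : Fin n) :
    |(A * Aᵀ) a i| ≤ rowNorm A a * rowNorm A i := by
  have h1 : (A * Aᵀ) a i = ∑ k, A a k * A i k := by
    simp [Matrix.mul_apply, Matrix.transpose_apply]
  rw [h1, ← Real.sqrt_sq_eq_abs]
  have h2 := Finset.sum_mul_sq_le_sq_mul_sq Finset.univ (fun k => A a k) (fun k => A i k)
  calc Real.sqrt ((∑ k, A a k * A i k) ^ 2)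
      ≤ Real.sqrt ((∑ k, A a k ^ 2) * (∑ k, A i k ^ 2)) := Real.sqrt_le_sqrt h2
    _ = rowNorm A a * rowNorm A i := by
        rw [Real.sqrt_mul (Finset.sum_nonneg fun _ _ => sq_nonneg _)]; rfl

lemma dot_contract {r rb : ℕ} (C : Matrix (Fin rb) (Fin r) ℝ) (h : Cᵀ * C = 1)
    (w : Fin rb → ℝ) : (Cᵀ *ᵥ w) ⬝ᵥ (Cᵀ *ᵥ w) ≤ w ⬝ᵥ w := by
  set z := Cᵀ *ᵥ w with hz
  have h1 : w ⬝ᵥ (C *ᵥ z) = z ⬝ᵥ z := by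
    rw [Matrix.dotProduct_mulVec, ← Matrix.mulVec_transpose]
  have h2 : (C *ᵥ z) ⬝ᵥ (C *ᵥ z) = z ⬝ᵥ z := by
    rw [Matrix.dotProduct_mulVec, ← Matrix.mulVec_transpose, Matrix.mulVec_mulVec, h,
      Matrix.one_mulVec]
  have h3 : 0 ≤ (w - C *ᵥ z) ⬝ᵥ (w - C *ᵥ z) := by
    unfold dotProduct
    exact Finset.sum_nonneg fun k _ => mul_self_nonneg _
  have h4 : (w - C *ᵥ z) ⬝ᵥ (w - C *ᵥ z)
      = w ⬝ᵥ w - (C *ᵥ z) ⬝ᵥ w - (w ⬝ᵥ (C *ᵥ z) - (C *ᵥ z) ⬝ᵥ (C *ᵥ z)) := by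
    rw [sub_dotProduct, dotProduct_sub, dotProduct_sub]
    rw [dotProduct_comm w (C *ᵥ z)]
  have h5 : (C *ᵥ z) ⬝ᵥ w = z ⬝ᵥ z := by rw [dotProduct_comm]; exact h1
  rw [h4, h1, h2, h5] at h3
  linarith

lemma rowNorm_le_factor {n r rb : ℕ} {U : Matrix (Fin n) (Fin r) ℝ}
    {Ub : Matrix (Fin n) (Fin rb) ℝ} {C : Matrix (Fin rb) (Fin r) ℝ}
    (hC : Cᵀ * C = 1) (hUC : U = Ub * C) (i : Fin n) :
    rowNorm U i ≤ rowNorm Ub i := by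
  set w : Fin rb → ℝ := fun l => Ub i l with hw
  have key : ∀ k, U i k = (Cᵀ *ᵥ w) k := by
    intro k
    rw [hUC, Matrix.mul_apply]
    simp only [Matrix.mulVec, dotProduct, Matrix.transpose_apply, hw]
    exact Finset.sum_congr rfl fun l _ => mul_comm _ _
  unfold rowNorm
  apply Real.sqrt_le_sqrt
  have h1 : ∑ k, U i k ^ 2 = (Cᵀ *ᵥ w) ⬝ᵥ (Cᵀ *ᵥ w) := by
    unfold dotProduct
    exact Finset.sum_congr rfl fun k _ => by rw [key k, sq]
  have h2 : w ⬝ᵥ w = ∑ l, Ub i l ^ 2 := by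
    unfold dotProduct
    exact Finset.sum_congr rfl fun l _ => (sq (w l)).symm
  calc ∑ k, U i k ^ 2 = (Cᵀ *ᵥ w) ⬝ᵥ (Cᵀ *ᵥ w) := h1
    _ ≤ w ⬝ᵥ w := dot_contract C hC w
    _ = ∑ l, Ub i l ^ 2 := h2

lemma sum_sq_eq_rank {n r : ℕ} {U : Matrix (Fin n) (Fin r) ℝ} (h : Uᵀ * U = 1) :
    ∑ i, ∑ k, (U i k) ^ 2 = r := by
  rw [Finset.sum_comm]
  have : ∀ k, ∑ i, U i k ^ 2 = (Uᵀ * U) k k := by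
    intro k
    simp [Matrix.mul_apply, Matrix.transpose_apply, sq]
  simp_rw [this, h]
  simp [Matrix.one_apply]

lemma linf_nonneg {m n : ℕ} (X : Matrix (Fin m) (Fin n) ℝ) : 0 ≤ linf X :=
  Real.iSup_nonneg fun _ => Real.iSup_nonneg fun _ => abs_nonneg _

lemma linf_le {m n : ℕ} {X : Matrix (Fin m) (Fin n) ℝ} {a : ℝ}
    (h : ∀ i j, |X i j| ≤ a) (h0 : 0 ≤ a) : linf X ≤ a :=
  Real.iSup_le (fun i => Real.iSup_le (h i) h0) h0

lemma le_linf {m n : ℕ} (X : Matrix (Fin m) (Fin n) ℝ) (i : Fin m) (j : Fin n) :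
    |X i j| ≤ linf X :=
  le_trans (le_ciSup (f := fun j' => |X i j'|) (Set.Finite.bddAbove (Set.finite_range _)) j)
    (le_ciSup (f := fun i' => ⨆ j', |X i' j'|) (Set.Finite.bddAbove (Set.finite_range _)) i)

lemma projTc_apply {n r rb : ℕ} (U V : Matrix (Fin n) (Fin r) ℝ)
    (Ub Vb : Matrix (Fin n) (Fin rb) ℝ) (X : Matrix (Fin n) (Fin n) ℝ) (a b : Fin n) :
    projTc U V Ub Vb X a b = ∑ i, ∑ j,
      ((U * Uᵀ) a i * (Vb * Vbᵀ) j b + (Ub * Ubᵀ) a i * (V * Vᵀ) j b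
        - (U * Uᵀ) a i * (V * Vᵀ) j b) * X i j := by
  have h1 : U * Uᵀ * X * Vb * Vbᵀ = (U * Uᵀ) * X * (Vb * Vbᵀ) := by
    rw [Matrix.mul_assoc (U * Uᵀ * X)]
  have h2 : Ub * Ubᵀ * X * V * Vᵀ = (Ub * Ubᵀ) * X * (V * Vᵀ) := by
    rw [Matrix.mul_assoc (Ub * Ubᵀ * X)]
  have h3 : U * Uᵀ * X * V * Vᵀ = (U * Uᵀ) * X * (V * Vᵀ) := by
    rw [Matrix.mul_assoc (U * Uᵀ * X)]
  show (U * Uᵀ * X * Vb * Vbᵀ + Ub * Ubᵀ * X * V * Vᵀ - U * Uᵀ * X * V * Vᵀ) a b = _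
  rw [Matrix.sub_apply, Matrix.add_apply, h1, h2, h3, triple_apply, triple_apply, triple_apply]
  simp only [← Finset.sum_add_distrib, ← Finset.sum_sub_distrib]
  exact Finset.sum_congr rfl fun i _ => Finset.sum_congr rfl fun j _ => by ring

end Aux

set_option maxHeartbeats 3000000 in
/-- Lemma 8: ℓ∞ bound, structured setting.
For a fixed matrix Z, if p ≥ c0 μ0 μ̄0 r r̄ log n / n, then with probability at
least 1 − c1 n^{−c2}, ‖(P_T R_Ω − P_T)Z‖_∞ ≤ (1/2)‖Z‖_∞. -/
theorem statement12 :
    ∃ c0 c1 c2 : ℝ, 0 < c0 ∧ 0 < c1 ∧ 0 < c2 ∧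
      ∀ (n r rb : ℕ) (Z : Matrix (Fin n) (Fin n) ℝ)
        (U V : Matrix (Fin n) (Fin r) ℝ) (Ub Vb : Matrix (Fin n) (Fin rb) ℝ)
        (μ0 μb0 p : ℝ),
        -- orthonormal columns and column space inclusions
        Uᵀ * U = 1 → Vᵀ * V = 1 → Ubᵀ * Ub = 1 → Vbᵀ * Vb = 1 →
        (∃ C : Matrix (Fin rb) (Fin r) ℝ, U = Ub * C) →
        (∃ C : Matrix (Fin rb) (Fin r) ℝ, V = Vb * C) →
        -- standard incoherence parameters μ0 and μ̄0
        (∀ i, rowNorm U i ≤ Real.sqrt (μ0 * r / n)) →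
        (∀ j, rowNorm V j ≤ Real.sqrt (μ0 * r / n)) →
        (∀ i, rowNorm Ub i ≤ Real.sqrt (μb0 * rb / n)) →
        (∀ j, rowNorm Vb j ≤ Real.sqrt (μb0 * rb / n)) →
        -- Bernoulli(p) sampling with p above the threshold
        0 ≤ p → p ≤ 1 →
        c0 * μ0 * μb0 * r * rb * Real.log n / n ≤ p →
        ENNReal.ofReal (1 - c1 * ((n : ℝ)) ^ (-c2)) ≤
          sampleMeasure n p
            {ω | linf (projTc U V Ub Vb (p⁻¹ • projB ω Z) - projTc U V Ub Vb Z) ≤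
              1 / 2 * linf Z} := by
  refine ⟨100, 2, 2, by norm_num, by norm_num, by norm_num, ?_⟩
  intro n r rb Z U V Ub Vb μ0 μb0 p hU hV hUb hVb hCU hCV hiU hiV hiUb hiVb hp0 hp1 hpge
  haveI hbp : IsProbabilityMeasure (bern p) := bern_prob hp0 hp1
  haveI hμprob : IsProbabilityMeasure (sampleMeasure n p) := by
    rw [sampleMeasure]; infer_instance
  have htriv : ENNReal.ofReal (1 - 2 * (n : ℝ) ^ (-(2:ℝ))) ≤ 1 := by
    apply ENNReal.ofReal_le_one.2
    have : (0:ℝ) ≤ 2 * (n : ℝ) ^ (-(2:ℝ)) := by positivity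
    linarith
  rcases Nat.lt_or_ge n 2 with hn | hn
  · interval_cases n
    · have huniv : {ω : Fin 0 × Fin 0 → Bool |
          linf (projTc U V Ub Vb (p⁻¹ • projB ω Z) - projTc U V Ub Vb Z) ≤
            1 / 2 * linf Z} = Set.univ := by
        apply Set.eq_univ_of_forall
        intro ω
        show linf _ ≤ _
        exact linf_le (fun i => i.elim0) (by have := linf_nonneg Z; linarith)
      rw [huniv, measure_univ]
      exact htriv
    · have h1 : ((1:ℕ):ℝ) ^ (-(2:ℝ)) = 1 := by norm_num
      rw [h1, show (1:ℝ) - 2 * 1 = -1 by norm_num, ENNReal.ofReal_of_nonpos (by norm_num)]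
      exact zero_le
  haveI : Nonempty (Fin n) := ⟨⟨0, by omega⟩⟩
  have hn2R : (2:ℝ) ≤ n := by exact_mod_cast hn
  have hn0R : (0:ℝ) < n := by linarith
  rcases Nat.eq_zero_or_pos r with hr | hr
  · subst hr
    have h1 : U * Uᵀ = 0 := by
      ext i j; simp [Matrix.mul_apply]
    have h2 : ∀ X : Matrix (Fin n) (Fin n) ℝ, X * V * Vᵀ = 0 := by
      intro X; ext i j; rw [Matrix.mul_apply]; simp
    have hproj : ∀ X : Matrix (Fin n) (Fin n) ℝ, projTc U V Ub Vb X = 0 := by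
      intro X
      unfold projTc
      rw [h1, h2 (Ub * Ubᵀ * X)]
      simp
    have huniv : {ω : Fin n × Fin n → Bool |
        linf (projTc U V Ub Vb (p⁻¹ • projB ω Z) - projTc U V Ub Vb Z) ≤
          1 / 2 * linf Z} = Set.univ := by
      apply Set.eq_univ_of_forall
      intro ω
      show linf _ ≤ _
      rw [hproj, hproj, sub_zero]
      have hz : linf (0 : Matrix (Fin n) (Fin n) ℝ) = 0 := by
        apply le_antisymm
        · exact linf_le (fun i j => by simp) le_rfl
        · exact linf_nonneg _
      rw [hz]
      have := linf_nonneg Z; linarith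
    rw [huniv, measure_univ]
    exact htriv
  rcases Nat.eq_zero_or_pos rb with hrb | hrb
  · exfalso
    subst hrb
    obtain ⟨C, hC⟩ := hCU
    have h00 := congrFun (congrFun hU ⟨0, hr⟩) ⟨0, hr⟩
    rw [Matrix.mul_apply] at h00
    simp [hC, Matrix.mul_apply, Matrix.one_apply] at h00
  obtain ⟨L, hLdef⟩ : ∃ x : ℝ, x = linf Z := ⟨_, rfl⟩
  rw [← hLdef]
  rcases le_or_gt L 0 with hL0 | hL
  · have hZ : Z = 0 := by
      ext i j
      have h := le_linf Z i j
      rw [← hLdef] at h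
      have h2 : |Z i j| ≤ 0 := le_trans h hL0
      simpa using le_antisymm h2 (abs_nonneg _)
    have hB : ∀ ω : Fin n × Fin n → Bool, projB ω Z = 0 := by
      intro ω; ext i j; simp [projB, hZ]
    have hproj0 : projTc U V Ub Vb Z = projTc U V Ub Vb (0 : Matrix (Fin n) (Fin n) ℝ) := by
      rw [hZ]
    have hzero : projTc U V Ub Vb (0 : Matrix (Fin n) (Fin n) ℝ) = 0 := by
      unfold projTc; simp
    have huniv : {ω : Fin n × Fin n → Bool |
        linf (projTc U V Ub Vb (p⁻¹ • projB ω Z) - projTc U V Ub Vb Z) ≤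
          1 / 2 * L} = Set.univ := by
      apply Set.eq_univ_of_forall
      intro ω
      show linf _ ≤ _
      rw [hB, smul_zero, hzero, hproj0, hzero, sub_zero]
      have hz : linf (0 : Matrix (Fin n) (Fin n) ℝ) = 0 := by
        apply le_antisymm
        · exact linf_le (fun i j => by simp) le_rfl
        · exact linf_nonneg _
      rw [hz]
      have h3 : 0 ≤ L := by rw [hLdef]; exact linf_nonneg Z
      linarith
    rw [huniv, measure_univ]
    exact htriv
  -- ===== main case =====
  obtain ⟨α, hαdef⟩ : ∃ x : ℝ, x = Real.sqrt (μ0 * r / n) := ⟨_, rfl⟩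
  obtain ⟨β, hβdef⟩ : ∃ x : ℝ, x = Real.sqrt (μb0 * rb / n) := ⟨_, rfl⟩
  rw [← hαdef] at hiU hiV
  rw [← hβdef] at hiUb hiVb
  have hα0 : 0 ≤ α := by rw [hαdef]; exact Real.sqrt_nonneg _
  have hβ0 : 0 ≤ β := by rw [hβdef]; exact Real.sqrt_nonneg _
  obtain ⟨C, hC⟩ := hCU
  obtain ⟨D, hD'⟩ := hCV
  have hCtC : Cᵀ * C = 1 := by
    have h := hU
    rw [hC, Matrix.transpose_mul, Matrix.mul_assoc Cᵀ, ← Matrix.mul_assoc Ubᵀ, hUb,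
      Matrix.one_mul] at h
    exact h
  have hDtD : Dᵀ * D = 1 := by
    have h := hV
    rw [hD', Matrix.transpose_mul, Matrix.mul_assoc Dᵀ, ← Matrix.mul_assoc Vbᵀ, hVb,
      Matrix.one_mul] at h
    exact h
  have hUβ : ∀ i, rowNorm U i ≤ β := fun i => (rowNorm_le_factor hCtC hC i).trans (hiUb i)
  have hVβ : ∀ j, rowNorm V j ≤ β := fun j => (rowNorm_le_factor hDtD hD' j).trans (hiVb j)
  have hr1R : (1:ℝ) ≤ (r:ℝ) := by exact_mod_cast hr
  have hrb1R : (1:ℝ) ≤ (rb:ℝ) := by exact_mod_cast hrb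
  have havg : ∀ {q : ℕ} (W : Matrix (Fin n) (Fin q) ℝ) (γ : ℝ), Wᵀ * W = 1 →
      (∀ i, rowNorm W i ≤ γ) → (q:ℝ)/n ≤ γ^2 := by
    intro q W γ hW hiW
    have hsum : ∑ _i : Fin n, (q:ℝ)/n ≤ ∑ i, ∑ k, (W i k)^2 := by
      rw [sum_sq_eq_rank hW, Finset.sum_const, Finset.card_univ, Fintype.card_fin,
        nsmul_eq_mul, mul_comm, div_mul_cancel₀ _ hn0R.ne']
    obtain ⟨i, -, hi⟩ := Finset.exists_le_of_sum_le Finset.univ_nonempty hsum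
    calc (q:ℝ)/n ≤ ∑ k, (W i k)^2 := hi
      _ = rowNorm W i ^ 2 := (sq_rowNorm W i).symm
      _ ≤ γ^2 := pow_le_pow_left₀ (rowNorm_nonneg W i) (hiW i) 2
  have hα2 : (r:ℝ)/n ≤ α^2 := havg U α hU hiU
  have hβ2 : (rb:ℝ)/n ≤ β^2 := havg Ub β hUb hiUb
  have hM1 : 1 ≤ α^2 * β^2 * (n:ℝ)^2 := by
    have h1 : (r:ℝ)/n * ((rb:ℝ)/n) ≤ α^2 * β^2 :=
      mul_le_mul hα2 hβ2 (by positivity) (le_trans (by positivity) hα2)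
    have h2 := mul_le_mul_of_nonneg_right h1 (sq_nonneg (n:ℝ))
    have h3 : (r:ℝ)/n * ((rb:ℝ)/n) * (n:ℝ)^2 = (r:ℝ)*(rb:ℝ) := by
      field_simp
    rw [h3] at h2
    have h4 : (1:ℝ) ≤ (r:ℝ)*(rb:ℝ) := by
      calc (1:ℝ) = 1*1 := by norm_num
        _ ≤ (r:ℝ)*(rb:ℝ) := mul_le_mul hr1R hrb1R (by norm_num) (by linarith)
    linarith
  have hm0 : 0 < α^2 * β^2 := by nlinarith [sq_nonneg ((n:ℝ))]
  have hα2eq : α^2 = μ0 * r / n := by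
    rw [hαdef]
    apply Real.sq_sqrt
    by_contra hcon
    push_neg at hcon
    have hz : α = 0 := by rw [hαdef]; exact Real.sqrt_eq_zero_of_nonpos hcon.le
    rw [hz] at hα2
    norm_num at hα2
    have : (0:ℝ) < (r:ℝ)/n := by positivity
    linarith
  have hβ2eq : β^2 = μb0 * rb / n := by
    rw [hβdef]
    apply Real.sq_sqrt
    by_contra hcon
    push_neg at hcon
    have hz : β = 0 := by rw [hβdef]; exact Real.sqrt_eq_zero_of_nonpos hcon.le
    rw [hz] at hβ2
    norm_num at hβ2
    have : (0:ℝ) < (rb:ℝ)/n := by positivity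
    linarith
  have hthr : 100 * (α^2 * β^2 * (n:ℝ)^2) * Real.log n / n ≤ p := by
    have he : 100 * (α^2 * β^2 * (n:ℝ)^2) = 100 * μ0 * μb0 * (r:ℝ) * (rb:ℝ) := by
      rw [hα2eq, hβ2eq]; field_simp
    calc 100 * (α^2 * β^2 * (n:ℝ)^2) * Real.log n / n
        = 100 * μ0 * μb0 * (r:ℝ) * (rb:ℝ) * Real.log n / n := by rw [he]
      _ ≤ p := hpge
  have hlogn : 0 < Real.log n := Real.log_pos (by linarith)
  have hlog_half : (1/2 : ℝ) ≤ Real.log n := by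
    have h2 : Real.log 2 ≤ Real.log n := Real.log_le_log (by norm_num) hn2R
    have := Real.log_two_gt_d9
    linarith
  have hppos : 0 < p := by
    apply lt_of_lt_of_le _ hthr
    apply div_pos _ hn0R
    apply mul_pos _ hlogn
    linarith [hM1]
  have hthr' : 100 * (α^2*β^2) * (n:ℝ) * Real.log n ≤ p := by
    have he : 100 * (α^2 * β^2 * (n:ℝ)^2) * Real.log n / n
        = 100 * (α^2*β^2) * (n:ℝ) * Real.log n := by
      field_simp
    rw [he] at hthr
    exact hthr
  have hmn : (α^2*β^2) * (n:ℝ) ≤ 1/50 := by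
    have h2' : 100 * (α^2*β^2) * (n:ℝ) * Real.log n ≤ 1 := hthr'.trans hp1
    have hx : (0:ℝ) ≤ 100 * (α^2*β^2) * (n:ℝ) := by positivity
    have hy := mul_le_mul_of_nonneg_left hlog_half hx
    linarith
  -- per-entry tail bound
  have hBad : ∀ (c : Fin n × Fin n → ℝ), (∀ q, |c q| ≤ 3*(α^2*β^2)*L) →
      sampleMeasure n p {ω | L/2 ≤ ∑ q : Fin n × Fin n, c q * (if ω q then p⁻¹ - 1 else -1)}
        ≤ ENNReal.ofReal ((n:ℝ)^(-(4:ℝ))) := by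
    intro c hc
    obtain ⟨l, hldef⟩ : ∃ x : ℝ, x = p / (72 * (α^2*β^2)^2 * (n:ℝ)^2 * L) := ⟨_, rfl⟩
    have hmne : (α^2*β^2) ≠ 0 := hm0.ne'
    have hLne : L ≠ 0 := hL.ne'
    have hnne : ((n:ℝ)) ≠ 0 := hn0R.ne'
    have hl0 : 0 ≤ l := by
      rw [hldef]
      apply div_nonneg hppos.le
      positivity
    have hlc : ∀ q, l * |c q| ≤ p := by
      intro q
      calc l * |c q| ≤ l * (3*(α^2*β^2)*L) := mul_le_mul_of_nonneg_left (hc q) hl0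
        _ = p / (24 * ((α^2*β^2) * (n:ℝ)^2)) := by
            rw [hldef]; field_simp; ring
        _ ≤ p := div_le_self hppos.le (by linarith [hM1])
    refine le_trans (chernoff_one hppos hp1 c (L/2) l hl0 hlc) (ENNReal.ofReal_le_ofReal ?_)
    rw [Real.rpow_def_of_pos hn0R]
    apply Real.exp_le_exp.2
    have hsum : ∑ q : Fin n × Fin n, 2*(l * c q)^2/p
        ≤ (n:ℝ)^2 * (2*(l*(3*(α^2*β^2)*L))^2/p) := by
      have hterm : ∀ q : Fin n × Fin n, 2*(l * c q)^2/p ≤ 2*(l*(3*(α^2*β^2)*L))^2/p := by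
        intro q
        have habs : |l * c q| ≤ l*(3*(α^2*β^2)*L) := by
          rw [abs_mul, abs_of_nonneg hl0]
          exact mul_le_mul_of_nonneg_left (hc q) hl0
        have hsq : (l * c q)^2 ≤ (l*(3*(α^2*β^2)*L))^2 := by
          rw [← sq_abs (l * c q)]
          exact pow_le_pow_left₀ (abs_nonneg _) habs 2
        exact (div_le_div_iff_of_pos_right hppos).2 (by linarith)
      calc ∑ q : Fin n × Fin n, 2*(l * c q)^2/p
          ≤ ∑ _q : Fin n × Fin n, 2*(l*(3*(α^2*β^2)*L))^2/p :=
            Finset.sum_le_sum (fun q _ => hterm q)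
        _ = (n:ℝ)^2 * (2*(l*(3*(α^2*β^2)*L))^2/p) := by
            rw [Finset.sum_const, Finset.card_univ, Fintype.card_prod, Fintype.card_fin,
              nsmul_eq_mul]
            push_cast
            ring
    have heq1 : l * (L/2) = p/(144*(α^2*β^2)^2*(n:ℝ)^2) := by
      rw [hldef]; field_simp; ring
    have heq2 : (n:ℝ)^2*(2*(l*(3*(α^2*β^2)*L))^2/p) = p/(288*(α^2*β^2)^2*(n:ℝ)^2) := by
      rw [hldef]; field_simp; ring
    have heq3 : p/(144*(α^2*β^2)^2*(n:ℝ)^2) = 2 * (p/(288*(α^2*β^2)^2*(n:ℝ)^2)) := by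
      field_simp; ring
    have hfin : 4 * Real.log n ≤ p/(288*(α^2*β^2)^2*(n:ℝ)^2) := by
      rw [le_div_iff₀ (by positivity)]
      have hx : (0:ℝ) ≤ 1152*(α^2*β^2)*(n:ℝ)*Real.log n := by positivity
      have hy := mul_le_mul_of_nonneg_left hmn hx
      linarith [hy, hthr', mul_pos (mul_pos hm0 hn0R) hlogn]
    linarith [hsum, heq1, heq2, heq3, hfin]
  -- entry representation
  have hDrep : ∀ (ω : Fin n × Fin n → Bool) (a b : Fin n),
      (projTc U V Ub Vb (p⁻¹ • projB ω Z) - projTc U V Ub Vb Z) a b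
        = ∑ q : Fin n × Fin n, (((U * Uᵀ) a q.1 * (Vb * Vbᵀ) q.2 b + (Ub * Ubᵀ) a q.1 * (V * Vᵀ) q.2 b - (U * Uᵀ) a q.1 * (V * Vᵀ) q.2 b) * Z q.1 q.2) * (if ω q then p⁻¹ - 1 else -1) := by
    intro ω a b
    rw [Matrix.sub_apply, projTc_apply, projTc_apply, Fintype.sum_prod_type,
      ← Finset.sum_sub_distrib]
    refine Finset.sum_congr rfl fun i _ => ?_
    rw [← Finset.sum_sub_distrib]
    refine Finset.sum_congr rfl fun j _ => ?_
    have hsm : (p⁻¹ • projB ω Z) i j = p⁻¹ * (if ω (i, j) then Z i j else 0) := rfl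
    rw [hsm]
    by_cases h : ω (i, j) <;> simp [h] <;> ring
  -- bound on the coefficients
  have hKb : ∀ (a b : Fin n) (q : Fin n × Fin n),
      |(((U * Uᵀ) a q.1 * (Vb * Vbᵀ) q.2 b + (Ub * Ubᵀ) a q.1 * (V * Vᵀ) q.2 b - (U * Uᵀ) a q.1 * (V * Vᵀ) q.2 b) * Z q.1 q.2)| ≤ 3*(α^2*β^2)*L := by
    intro a b q
    obtain ⟨i, j⟩ := q
    show |(((U * Uᵀ) a i * (Vb * Vbᵀ) j b + (Ub * Ubᵀ) a i * (V * Vᵀ) j b - (U * Uᵀ) a i * (V * Vᵀ) j b) * Z i j)| ≤ 3*(α^2*β^2)*L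
    have hZb : |Z i j| ≤ L := by rw [hLdef]; exact le_linf Z i j
    have e1 : |(U * Uᵀ) a i| ≤ α * α :=
      le_trans (entry_bound U a i) (mul_le_mul (hiU a) (hiU i) (rowNorm_nonneg _ _) hα0)
    have e1' : |(U * Uᵀ) a i| ≤ α * β :=
      le_trans (entry_bound U a i) (mul_le_mul (hiU a) (hUβ i) (rowNorm_nonneg _ _) hα0)
    have e2 : |(V * Vᵀ) j b| ≤ β * α :=
      le_trans (entry_bound V j b) (mul_le_mul (hVβ j) (hiV b) (rowNorm_nonneg _ _) hβ0)
    have e2' : |(V * Vᵀ) j b| ≤ α * α :=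
      le_trans (entry_bound V j b) (mul_le_mul (hiV j) (hiV b) (rowNorm_nonneg _ _) hα0)
    have e3 : |(Ub * Ubᵀ) a i| ≤ β * β :=
      le_trans (entry_bound Ub a i) (mul_le_mul (hiUb a) (hiUb i) (rowNorm_nonneg _ _) hβ0)
    have e4 : |(Vb * Vbᵀ) j b| ≤ β * β :=
      le_trans (entry_bound Vb j b) (mul_le_mul (hiVb j) (hiVb b) (rowNorm_nonneg _ _) hβ0)
    have hKle : |(U * Uᵀ) a i * (Vb * Vbᵀ) j b + (Ub * Ubᵀ) a i * (V * Vᵀ) j b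
        - (U * Uᵀ) a i * (V * Vᵀ) j b| ≤ 3*(α^2*β^2) := by
      have t1 : |(U * Uᵀ) a i * (Vb * Vbᵀ) j b| ≤ (α*α)*(β*β) := by
        rw [abs_mul]
        exact mul_le_mul e1 e4 (abs_nonneg _) (by positivity)
      have t2 : |(Ub * Ubᵀ) a i * (V * Vᵀ) j b| ≤ (β*β)*(α*α) := by
        rw [abs_mul]
        exact mul_le_mul e3 e2' (abs_nonneg _) (by positivity)
      have t3 : |(U * Uᵀ) a i * (V * Vᵀ) j b| ≤ (α*β)*(β*α) := by
        rw [abs_mul]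
        exact mul_le_mul e1' e2 (abs_nonneg _) (by positivity)
      calc |(U * Uᵀ) a i * (Vb * Vbᵀ) j b + (Ub * Ubᵀ) a i * (V * Vᵀ) j b
          - (U * Uᵀ) a i * (V * Vᵀ) j b|
          ≤ |(U * Uᵀ) a i * (Vb * Vbᵀ) j b + (Ub * Ubᵀ) a i * (V * Vᵀ) j b|
            + |(U * Uᵀ) a i * (V * Vᵀ) j b| := abs_sub _ _
        _ ≤ |(U * Uᵀ) a i * (Vb * Vbᵀ) j b| + |(Ub * Ubᵀ) a i * (V * Vᵀ) j b|
            + |(U * Uᵀ) a i * (V * Vᵀ) j b| := by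
            linarith [abs_add_le ((U * Uᵀ) a i * (Vb * Vbᵀ) j b) ((Ub * Ubᵀ) a i * (V * Vᵀ) j b)]
        _ ≤ (α*α)*(β*β) + (β*β)*(α*α) + (α*β)*(β*α) := by linarith
        _ = 3*(α^2*β^2) := by ring
    calc |(((U * Uᵀ) a i * (Vb * Vbᵀ) j b + (Ub * Ubᵀ) a i * (V * Vᵀ) j b - (U * Uᵀ) a i * (V * Vᵀ) j b) * Z i j)|
        = |(U * Uᵀ) a i * (Vb * Vbᵀ) j b + (Ub * Ubᵀ) a i * (V * Vᵀ) j b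
            - (U * Uᵀ) a i * (V * Vᵀ) j b| * |Z i j| := abs_mul _ _
      _ ≤ 3*(α^2*β^2) * L := mul_le_mul hKle hZb (abs_nonneg _) (by positivity)
  -- union bound
  set Gset := {ω : Fin n × Fin n → Bool |
      linf (projTc U V Ub Vb (p⁻¹ • projB ω Z) - projTc U V Ub Vb Z) ≤ 1 / 2 * L} with hGdef
  have hsub : Gsetᶜ ⊆ ⋃ a : Fin n, ⋃ b : Fin n,
      ({ω : Fin n × Fin n → Bool |
          L/2 ≤ ∑ q : Fin n × Fin n, (((U * Uᵀ) a q.1 * (Vb * Vbᵀ) q.2 b + (Ub * Ubᵀ) a q.1 * (V * Vᵀ) q.2 b - (U * Uᵀ) a q.1 * (V * Vᵀ) q.2 b) * Z q.1 q.2) * (if ω q then p⁻¹ - 1 else -1)}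
        ∪ {ω : Fin n × Fin n → Bool |
          L/2 ≤ ∑ q : Fin n × Fin n, (-((((U * Uᵀ) a q.1 * (Vb * Vbᵀ) q.2 b + (Ub * Ubᵀ) a q.1 * (V * Vᵀ) q.2 b - (U * Uᵀ) a q.1 * (V * Vᵀ) q.2 b) * Z q.1 q.2))) * (if ω q then p⁻¹ - 1 else -1)}) := by
    intro ω hω
    by_contra hcon
    simp only [Set.mem_iUnion, Set.mem_union, Set.mem_setOf_eq, not_exists, not_or,
      not_le] at hcon
    apply hω
    show linf _ ≤ 1 / 2 * L
    have h0L : (0:ℝ) ≤ 1/2 * L := by linarith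
    apply linf_le _ h0L
    intro a b
    rw [hDrep ω a b]
    obtain ⟨h1, h2⟩ := hcon a b
    have hneg : ∑ q : Fin n × Fin n, (-((((U * Uᵀ) a q.1 * (Vb * Vbᵀ) q.2 b + (Ub * Ubᵀ) a q.1 * (V * Vᵀ) q.2 b - (U * Uᵀ) a q.1 * (V * Vᵀ) q.2 b) * Z q.1 q.2))) * (if ω q then p⁻¹ - 1 else -1)
        = -∑ q : Fin n × Fin n, (((U * Uᵀ) a q.1 * (Vb * Vbᵀ) q.2 b + (Ub * Ubᵀ) a q.1 * (V * Vᵀ) q.2 b - (U * Uᵀ) a q.1 * (V * Vᵀ) q.2 b) * Z q.1 q.2) * (if ω q then p⁻¹ - 1 else -1) := by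
      rw [← Finset.sum_neg_distrib]
      exact Finset.sum_congr rfl fun q _ => by ring
    rw [hneg] at h2
    have habs : |∑ q : Fin n × Fin n, (((U * Uᵀ) a q.1 * (Vb * Vbᵀ) q.2 b + (Ub * Ubᵀ) a q.1 * (V * Vᵀ) q.2 b - (U * Uᵀ) a q.1 * (V * Vᵀ) q.2 b) * Z q.1 q.2) * (if ω q then p⁻¹ - 1 else -1)| < L/2 :=
      abs_lt.2 ⟨by linarith, h1⟩
    linarith [habs]
  have hcompl : sampleMeasure n p Gsetᶜ ≤ ENNReal.ofReal (2*(n:ℝ)^(-(2:ℝ))) := by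
    have hone : ∀ a b : Fin n,
        sampleMeasure n p
          ({ω : Fin n × Fin n → Bool |
            L/2 ≤ ∑ q : Fin n × Fin n, (((U * Uᵀ) a q.1 * (Vb * Vbᵀ) q.2 b + (Ub * Ubᵀ) a q.1 * (V * Vᵀ) q.2 b - (U * Uᵀ) a q.1 * (V * Vᵀ) q.2 b) * Z q.1 q.2) * (if ω q then p⁻¹ - 1 else -1)}
          ∪ {ω : Fin n × Fin n → Bool |
            L/2 ≤ ∑ q : Fin n × Fin n, (-((((U * Uᵀ) a q.1 * (Vb * Vbᵀ) q.2 b + (Ub * Ubᵀ) a q.1 * (V * Vᵀ) q.2 b - (U * Uᵀ) a q.1 * (V * Vᵀ) q.2 b) * Z q.1 q.2))) * (if ω q then p⁻¹ - 1 else -1)})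
          ≤ 2 * ENNReal.ofReal ((n:ℝ)^(-(4:ℝ))) := by
      intro a b
      refine le_trans (measure_union_le _ _) ?_
      rw [two_mul]
      refine add_le_add (hBad _ (fun q => hKb a b q)) (hBad _ (fun q => ?_))
      rw [abs_neg]
      exact hKb a b q
    calc sampleMeasure n p Gsetᶜ
        ≤ sampleMeasure n p (⋃ a : Fin n, ⋃ b : Fin n,
            ({ω : Fin n × Fin n → Bool |
              L/2 ≤ ∑ q : Fin n × Fin n, (((U * Uᵀ) a q.1 * (Vb * Vbᵀ) q.2 b + (Ub * Ubᵀ) a q.1 * (V * Vᵀ) q.2 b - (U * Uᵀ) a q.1 * (V * Vᵀ) q.2 b) * Z q.1 q.2) * (if ω q then p⁻¹ - 1 else -1)}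
            ∪ {ω : Fin n × Fin n → Bool |
              L/2 ≤ ∑ q : Fin n × Fin n, (-((((U * Uᵀ) a q.1 * (Vb * Vbᵀ) q.2 b + (Ub * Ubᵀ) a q.1 * (V * Vᵀ) q.2 b - (U * Uᵀ) a q.1 * (V * Vᵀ) q.2 b) * Z q.1 q.2))) * (if ω q then p⁻¹ - 1 else -1)})) :=
          measure_mono hsub
      _ ≤ ∑' a : Fin n, sampleMeasure n p (⋃ b : Fin n,
            ({ω : Fin n × Fin n → Bool |
              L/2 ≤ ∑ q : Fin n × Fin n, (((U * Uᵀ) a q.1 * (Vb * Vbᵀ) q.2 b + (Ub * Ubᵀ) a q.1 * (V * Vᵀ) q.2 b - (U * Uᵀ) a q.1 * (V * Vᵀ) q.2 b) * Z q.1 q.2) * (if ω q then p⁻¹ - 1 else -1)}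
            ∪ {ω : Fin n × Fin n → Bool |
              L/2 ≤ ∑ q : Fin n × Fin n, (-((((U * Uᵀ) a q.1 * (Vb * Vbᵀ) q.2 b + (Ub * Ubᵀ) a q.1 * (V * Vᵀ) q.2 b - (U * Uᵀ) a q.1 * (V * Vᵀ) q.2 b) * Z q.1 q.2))) * (if ω q then p⁻¹ - 1 else -1)})) :=
          measure_iUnion_le _
      _ = ∑ a : Fin n, sampleMeasure n p (⋃ b : Fin n,
            ({ω : Fin n × Fin n → Bool |
              L/2 ≤ ∑ q : Fin n × Fin n, (((U * Uᵀ) a q.1 * (Vb * Vbᵀ) q.2 b + (Ub * Ubᵀ) a q.1 * (V * Vᵀ) q.2 b - (U * Uᵀ) a q.1 * (V * Vᵀ) q.2 b) * Z q.1 q.2) * (if ω q then p⁻¹ - 1 else -1)}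
            ∪ {ω : Fin n × Fin n → Bool |
              L/2 ≤ ∑ q : Fin n × Fin n, (-((((U * Uᵀ) a q.1 * (Vb * Vbᵀ) q.2 b + (Ub * Ubᵀ) a q.1 * (V * Vᵀ) q.2 b - (U * Uᵀ) a q.1 * (V * Vᵀ) q.2 b) * Z q.1 q.2))) * (if ω q then p⁻¹ - 1 else -1)})) :=
          tsum_fintype _
      _ ≤ ∑ a : Fin n, ∑ b : Fin n, sampleMeasure n p
            ({ω : Fin n × Fin n → Bool |
              L/2 ≤ ∑ q : Fin n × Fin n, (((U * Uᵀ) a q.1 * (Vb * Vbᵀ) q.2 b + (Ub * Ubᵀ) a q.1 * (V * Vᵀ) q.2 b - (U * Uᵀ) a q.1 * (V * Vᵀ) q.2 b) * Z q.1 q.2) * (if ω q then p⁻¹ - 1 else -1)}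
            ∪ {ω : Fin n × Fin n → Bool |
              L/2 ≤ ∑ q : Fin n × Fin n, (-((((U * Uᵀ) a q.1 * (Vb * Vbᵀ) q.2 b + (Ub * Ubᵀ) a q.1 * (V * Vᵀ) q.2 b - (U * Uᵀ) a q.1 * (V * Vᵀ) q.2 b) * Z q.1 q.2))) * (if ω q then p⁻¹ - 1 else -1)}) :=
          Finset.sum_le_sum (fun a _ =>
            le_trans (measure_iUnion_le _) (le_of_eq (tsum_fintype _)))
      _ ≤ ∑ _a : Fin n, ∑ _b : Fin n, 2 * ENNReal.ofReal ((n:ℝ)^(-(4:ℝ))) :=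
          Finset.sum_le_sum (fun a _ => Finset.sum_le_sum (fun b _ => hone a b))
      _ = (n : ENNReal) * ((n : ENNReal) * (2 * ENNReal.ofReal ((n:ℝ)^(-(4:ℝ))))) := by
          rw [Finset.sum_const, Finset.sum_const, Finset.card_univ, Fintype.card_fin,
            nsmul_eq_mul, nsmul_eq_mul]
      _ ≤ ENNReal.ofReal (2*(n:ℝ)^(-(2:ℝ))) := by
          rw [show ((n:ENNReal)) = ENNReal.ofReal ((n:ℝ)) from (ENNReal.ofReal_natCast n).symm,
            show ((2:ENNReal)) = ENNReal.ofReal ((2:ℝ)) from by norm_num,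
            ← ENNReal.ofReal_mul (by norm_num), ← ENNReal.ofReal_mul (by positivity),
            ← ENNReal.ofReal_mul (by positivity)]
          apply ENNReal.ofReal_le_ofReal
          have hnn : (n:ℝ) * ((n:ℝ) * (2 * (n:ℝ)^(-(4:ℝ))))
              = ((n:ℝ)*(n:ℝ)) * (2 * (n:ℝ)^(-(4:ℝ))) := by ring
          rw [hnn, show ((n:ℝ)*(n:ℝ)) = (n:ℝ)^(2:ℝ) from by rw [Real.rpow_two, sq],
            mul_left_comm, ← Real.rpow_add hn0R]
          norm_num
  have hGmeas : MeasurableSet Gset := .of_discrete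
  have hGeq : sampleMeasure n p Gset = 1 - sampleMeasure n p Gsetᶜ := by
    rw [measure_compl hGmeas (measure_ne_top _ _), measure_univ,
      ENNReal.sub_sub_cancel ENNReal.one_ne_top prob_le_one]
  rw [hGeq, ENNReal.ofReal_sub _ (by positivity), ENNReal.ofReal_one]
  exact tsub_le_tsub_left hcompl 1

end
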